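/- Let (x_n) be a sequence in ℕ (of positive terms) such that the map from nonempty finite subsets s of ℕ to ℕ given by s ↦ ∑_{n∈s} x_n is injective and satisfies: a sum over s plus a sum over t equals a sum over v iff s and t are disjoint with s ∪ t = v. If (y_k) is a sequence such that every finite sum of distinct y_k lies in FS(x_n), then the analogous injectivity and disjoint-union properties hold for (y_k). -/

import Mathlib

theorem stmt_5 (x y : ℕ → ℕ) (hxpos : ∀ n, 0 < x n)
    (hinj : ∀ s t : Finset ℕ, s.Nonempty → t.Nonempty →
      (s.sum x = t.sum x ↔ s = t))
    (hadd : ∀ s t v : Finset ℕ, s.Nonempty → t.Nonempty → v.Nonempty →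
      (s.sum x + t.sum x = v.sum x ↔ Disjoint s t ∧ s ∪ t = v))
    (hy : ∀ u : Finset ℕ, u.Nonempty →
      ∃ t : Finset ℕ, t.Nonempty ∧ u.sum y = t.sum x) :
    (∀ s t : Finset ℕ, s.Nonempty → t.Nonempty →
      (s.sum y = t.sum y ↔ s = t)) ∧
    (∀ s t v : Finset ℕ, s.Nonempty → t.Nonempty → v.Nonempty →
      (s.sum y + t.sum y = v.sum y ↔ Disjoint s t ∧ s ∪ t = v)) := by
  classical
  set T : ℕ → Finset ℕ := fun k => (hy {k} (Finset.singleton_nonempty k)).choose with hTdef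
  have hTne : ∀ k, (T k).Nonempty := fun k =>
    (hy {k} (Finset.singleton_nonempty k)).choose_spec.1
  have hTsum : ∀ k, y k = (T k).sum x := fun k => by
    have := (hy {k} (Finset.singleton_nonempty k)).choose_spec.2
    exact (Finset.sum_singleton y k).symm.trans this
  have hBne : ∀ s : Finset ℕ, s.Nonempty → (s.biUnion T).Nonempty := by
    intro s hs
    obtain ⟨b, hb⟩ := hs
    exact ⟨(hTne b).choose, Finset.mem_biUnion.2 ⟨b, hb, (hTne b).choose_spec⟩⟩
  have hBU : ∀ s t : Finset ℕ, (s ∪ t).biUnion T = s.biUnion T ∪ t.biUnion T := by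
    intro s t
    ext a
    simp only [Finset.mem_biUnion, Finset.mem_union, ← exists_or]
    exact exists_congr fun k => by tauto
  have hB : ∀ s : Finset ℕ, s.Nonempty → s.sum y = (s.biUnion T).sum x := by
    intro s
    induction s using Finset.induction_on with
    | empty => intro h; exact absurd h (by simp)
    | @insert a s ha ih =>
      intro _
      rcases s.eq_empty_or_nonempty with rfl | hs
      · simpa using hTsum a
      · obtain ⟨t, htne, ht⟩ := hy (insert a s) (Finset.insert_nonempty a s)
        have h1 : (insert a s).sum y = y a + s.sum y := Finset.sum_insert ha
        have h2 : (T a).sum x + (s.biUnion T).sum x = t.sum x := by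
          rw [← hTsum, ← ih hs, ← h1, ht]
        have hu := (hadd _ _ _ (hTne a) (hBne s hs) htne).mp h2
        rw [Finset.biUnion_insert, hu.2]
        exact ht
  have hPD : ∀ k l : ℕ, k ≠ l → Disjoint (T k) (T l) := by
    intro k l hkl
    have hpair : ({k, l} : Finset ℕ).sum y = (({k, l} : Finset ℕ).biUnion T).sum x :=
      hB _ (by simp)
    have hps : ({k, l} : Finset ℕ).sum y = y k + y l := Finset.sum_pair hkl
    have heq : (T k).sum x + (T l).sum x = (({k, l} : Finset ℕ).biUnion T).sum x := by
      rw [← hTsum, ← hTsum, ← hps, hpair]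
    exact ((hadd _ _ _ (hTne k) (hTne l) (hBne _ (by simp))).mp heq).1
  have hmem : ∀ (k : ℕ) (s : Finset ℕ), k ∈ s ↔ ((T k) ∩ s.biUnion T).Nonempty := by
    intro k s
    constructor
    · intro hk
      obtain ⟨a, ha⟩ := hTne k
      exact ⟨a, Finset.mem_inter.2 ⟨ha, Finset.mem_biUnion.2 ⟨k, hk, ha⟩⟩⟩
    · rintro ⟨a, ha⟩
      obtain ⟨ha1, ha2⟩ := Finset.mem_inter.1 ha
      obtain ⟨l, hl, hal⟩ := Finset.mem_biUnion.1 ha2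
      by_cases hkl : k = l
      · exact hkl ▸ hl
      · exact absurd ha1 (Finset.disjoint_left.1 (hPD k l hkl) · hal)
  have injB : ∀ s t : Finset ℕ, s.biUnion T = t.biUnion T → s = t := by
    intro s t h
    ext k
    rw [hmem k s, hmem k t, h]
  have disjB : ∀ s t : Finset ℕ, Disjoint s t ↔ Disjoint (s.biUnion T) (t.biUnion T) := by
    intro s t
    constructor
    · intro h
      rw [Finset.disjoint_left]
      intro a has hat
      obtain ⟨k, hk, hak⟩ := Finset.mem_biUnion.1 has
      obtain ⟨l, hl, hal⟩ := Finset.mem_biUnion.1 hat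
      by_cases hkl : k = l
      · exact Finset.disjoint_left.1 h hk (hkl ▸ hl)
      · exact Finset.disjoint_left.1 (hPD k l hkl) hak hal
    · intro h
      rw [Finset.disjoint_left]
      intro k hks hkt
      obtain ⟨a, ha⟩ := hTne k
      exact Finset.disjoint_left.1 h (Finset.mem_biUnion.2 ⟨k, hks, ha⟩)
        (Finset.mem_biUnion.2 ⟨k, hkt, ha⟩)
  constructor
  · intro s t hs ht
    rw [hB s hs, hB t ht, hinj _ _ (hBne s hs) (hBne t ht)]
    exact ⟨injB s t, fun h => h ▸ rfl⟩
  · intro s t v hs ht hv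
    rw [hB s hs, hB t ht, hB v hv, hadd _ _ _ (hBne s hs) (hBne t ht) (hBne v hv)]
    constructor
    · rintro ⟨hd, hu⟩
      refine ⟨(disjB s t).2 hd, injB _ _ ?_⟩
      rw [hBU]
      exact hu
    · rintro ⟨hd, rfl⟩
      exact ⟨(disjB s t).1 hd, (hBU s t).symm⟩
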